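/- Let E be a real inner product space, 0 < ε < ε', k > 0, x_d ∈ E, and let κ be the smoothed controller κ(x) = κ₀(x) − max(0, φ(x)) · min(0, ⟪g(x), κ₀(x)⟫) · g(x) with φ(x) = min(1, (ε' − b(x))/(ε' − ε)) and κ₀(x) = −k(x − x_d). Assume ‖g(y)‖ ≤ 1 for every y ∈ E, and suppose r > 0 is such that b(y) > ε' for every y in the closed ball of radius r around x_d. Then every differentiable curve x : ℝ → E with x'(t) = κ(x(t)) for all t ≥ 0 and ‖x(0) − x_d‖ ≤ r satisfies x(t) = x_d + e^{−kt}·(x(0) − x_d) for all t ≥ 0; in particular ‖x(t) − x_d‖ = e^{−kt}‖x(0) − x_d‖, so x_d is locally exponentially stable. -/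

import Mathlib

open scoped RealInnerProductSpace

theorem local_exponential_stability
    {E : Type*} [NormedAddCommGroup E] [InnerProductSpace ℝ E]
    (ε ε' : ℝ) (hε : 0 < ε) (hεε' : ε < ε')
    (k : ℝ) (hk : 0 < k) (xd : E)
    (b : E → ℝ) (g κ₀ : E → E)
    (hκ₀ : ∀ x, κ₀ x = -(k • (x - xd)))
    (hgnorm : ∀ y, ‖g y‖ ≤ 1)
    (φ : E → ℝ) (hφ : ∀ x, φ x = min 1 ((ε' - b x) / (ε' - ε)))
    (κ : E → E)
    (hκ : ∀ x, κ x = κ₀ x - (max 0 (φ x) * min 0 ⟪g x, κ₀ x⟫) • g x)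
    (r : ℝ) (hr : 0 < r)
    (hball : ∀ y ∈ Metric.closedBall xd r, ε' < b y)
    (x : ℝ → E)
    (hx : ∀ t ∈ Set.Ici (0 : ℝ), HasDerivAt x (κ (x t)) t)
    (hx0 : ‖x 0 - xd‖ ≤ r) :
    ∀ t ∈ Set.Ici (0 : ℝ),
      x t = xd + Real.exp (-k * t) • (x 0 - xd)
      ∧ ‖x t - xd‖ = Real.exp (-k * t) * ‖x 0 - xd‖ := by
  -- Key dissipation inequality, valid everywhere
  have key : ∀ z : E, ⟪κ z, z - xd⟫ ≤ 0 := by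
    intro z
    set p : ℝ := ⟪g z, κ₀ z⟫ with hp
    set a : ℝ := max 0 (φ z) with ha
    set q : ℝ := ⟪g z, z - xd⟫ with hqdef
    set n : ℝ := ‖z - xd‖ ^ 2 with hn
    have ha0 : 0 ≤ a := le_max_left _ _
    have ha1 : a ≤ 1 := by
      rw [ha]
      have : φ z ≤ 1 := by rw [hφ]; exact min_le_left _ _
      exact max_le zero_le_one this
    have hm : min 0 p * p ≤ p ^ 2 := by
      rcases le_or_gt 0 p with h | h
      · rw [min_eq_left h]; nlinarith [sq_nonneg p]
      · rw [min_eq_right h.le]; nlinarith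
    have hm0 : 0 ≤ min 0 p * p := by
      rcases le_or_gt 0 p with h | h
      · rw [min_eq_left h]; simp
      · rw [min_eq_right h.le]; exact mul_self_nonneg p
    have hpbound : |p| ≤ k * ‖z - xd‖ := by
      calc |p| ≤ ‖g z‖ * ‖κ₀ z‖ := abs_real_inner_le_norm _ _
        _ ≤ 1 * ‖κ₀ z‖ :=
            mul_le_mul_of_nonneg_right (hgnorm z) (norm_nonneg _)
        _ = k * ‖z - xd‖ := by
            rw [one_mul, hκ₀, norm_neg, norm_smul, Real.norm_eq_abs,
              abs_of_pos hk]
    have hp2 : p ^ 2 ≤ k ^ 2 * n := by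
      calc p ^ 2 = |p| ^ 2 := (sq_abs p).symm
        _ ≤ (k * ‖z - xd‖) ^ 2 := pow_le_pow_left₀ (abs_nonneg p) hpbound 2
        _ = k ^ 2 * n := by rw [hn]; ring
    have hq : k * q = -p := by
      rw [hqdef, hp, hκ₀, inner_neg_right, real_inner_smul_right]; ring
    have expand : ⟪κ z, z - xd⟫ = -(k * n) - (a * min 0 p) * q := by
      rw [hκ, inner_sub_left, real_inner_smul_left]
      nth_rewrite 1 [hκ₀]
      rw [inner_neg_left, real_inner_smul_left, real_inner_self_eq_norm_sq,
        ← hqdef, ← hn, ← hp, ← ha]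
    have h1 : a * (min 0 p * p) ≤ p ^ 2 := by
      calc a * (min 0 p * p) ≤ 1 * (min 0 p * p) :=
            mul_le_mul_of_nonneg_right ha1 hm0
        _ = min 0 p * p := one_mul _
        _ ≤ p ^ 2 := hm
    have e2 : k * (-(k * n) - (a * min 0 p) * q)
        = -(k ^ 2 * n) + a * (min 0 p * p) := by
      linear_combination (-(a * min 0 p)) * hq
    have final : k * ⟪κ z, z - xd⟫ ≤ 0 := by
      rw [expand, e2]; linarith
    nlinarith [final, hk]
  have hu : ∀ t ∈ Set.Ici (0 : ℝ), HasDerivAt (fun t => x t - xd) (κ (x t)) t :=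
    fun t ht => (hx t ht).sub_const xd
  have hh : ∀ t ∈ Set.Ici (0 : ℝ),
      HasDerivAt (fun t => ‖x t - xd‖ ^ 2)
        (2 * ⟪κ (x t), x t - xd⟫) t := by
    intro t ht
    have h0 := (hu t ht).inner ℝ (hu t ht)
    have h2 : (fun t => ⟪x t - xd, x t - xd⟫) = fun t => ‖x t - xd‖ ^ 2 := by
      funext s; rw [real_inner_self_eq_norm_sq]
    rw [h2] at h0
    have h3 : 2 * ⟪κ (x t), x t - xd⟫ = ⟪x t - xd, κ (x t)⟫ + ⟪κ (x t), x t - xd⟫ := by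
      rw [real_inner_comm (x t - xd) (κ (x t))]; ring
    rw [h3]; exact h0
  have hanti : AntitoneOn (fun t => ‖x t - xd‖ ^ 2) (Set.Ici (0 : ℝ)) := by
    apply antitoneOn_of_deriv_nonpos (convex_Ici 0)
    · exact fun t ht => ((hh t ht).continuousAt).continuousWithinAt
    · intro t ht
      rw [interior_Ici] at ht
      exact (hh t (Set.mem_Ici.mpr (le_of_lt ht))).differentiableAt.differentiableWithinAt
    · intro t ht
      rw [interior_Ici] at ht
      rw [(hh t (Set.mem_Ici.mpr (le_of_lt ht))).deriv]
      have := key (x t)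
      linarith
  have hin : ∀ t ∈ Set.Ici (0 : ℝ), x t ∈ Metric.closedBall xd r := by
    intro t ht
    have h1 : ‖x t - xd‖ ^ 2 ≤ ‖x 0 - xd‖ ^ 2 := hanti Set.self_mem_Ici ht ht
    have h2 : ‖x 0 - xd‖ ^ 2 ≤ r ^ 2 := pow_le_pow_left₀ (norm_nonneg _) hx0 2
    rw [Metric.mem_closedBall, dist_eq_norm]
    nlinarith [norm_nonneg (x t - xd)]
  have hκball : ∀ z ∈ Metric.closedBall xd r, κ z = -(k • (z - xd)) := by
    intro z hz
    have hb : ε' < b z := hball z hz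
    have hφz : φ z < 0 := by
      rw [hφ]
      have hnum : ε' - b z < 0 := by linarith
      have hden : 0 < ε' - ε := by linarith
      exact lt_of_le_of_lt (min_le_right _ _) (div_neg_of_neg_of_pos hnum hden)
    rw [hκ, max_eq_left hφz.le, zero_mul, zero_smul, sub_zero, hκ₀]
  set F : ℝ → E := fun t => Real.exp (k * t) • (x t - xd) with hF
  have hFderiv : ∀ t ∈ Set.Ici (0 : ℝ), HasDerivAt F 0 t := by
    intro t ht
    have he : HasDerivAt (fun t => Real.exp (k * t)) (k * Real.exp (k * t)) t := by
      have := ((hasDerivAt_id' t).const_mul k).exp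
      simp only [mul_one] at this
      rw [show k * Real.exp (k * t) = Real.exp (k * t) * k from mul_comm _ _]
      exact this
    have hd := he.smul (hu t ht)
    rw [hκball (x t) (hin t ht)] at hd
    have hd' : HasDerivAt F (Real.exp (k * t) • -(k • (x t - xd))
        + (k * Real.exp (k * t)) • (x t - xd)) t := hd
    have hz : Real.exp (k * t) • -(k • (x t - xd))
        + (k * Real.exp (k * t)) • (x t - xd) = 0 := by module
    rw [hz] at hd'; exact hd'
  have hFconst : ∀ t ∈ Set.Ici (0 : ℝ), F t = F 0 := by
    intro t ht
    have hc : ContinuousOn F (Set.Icc 0 t) := fun s hs =>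
      ((hFderiv s hs.1).continuousAt).continuousWithinAt
    have hd : ∀ s ∈ Set.Ico 0 t, HasDerivWithinAt F 0 (Set.Ici s) s := fun s hs =>
      (hFderiv s hs.1).hasDerivWithinAt
    exact constant_of_has_deriv_right_zero hc hd t ⟨ht, le_refl t⟩
  intro t ht
  have hFt := hFconst t ht
  have hF0 : F 0 = x 0 - xd := by simp [hF]
  have h2 : x t - xd = Real.exp (-k * t) • (x 0 - xd) := by
    have hEq : Real.exp (k * t) • (x t - xd) = x 0 - xd := by rw [← hF0]; exact hFt
    rw [← hEq, smul_smul, ← Real.exp_add]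
    simp
  have hxt : x t = xd + Real.exp (-k * t) • (x 0 - xd) := by rw [← h2]; abel
  refine ⟨hxt, ?_⟩
  rw [h2, norm_smul, Real.norm_eq_abs, abs_of_pos (Real.exp_pos _)]
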